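/- For arbitrary positive costs c, the expected nonadaptive cost of the modified round-robin permutation τ_MRR for evaluating the score classification function f is at most 2(B−1) times the minimum, over all permutations τ of Fin n, of the expected nonadaptive cost of τ for f. -/

import Mathlib

open Finset

/-- Number of true bits of an assignment. -/
def N1 {n : ℕ} (a : Fin n → Bool) : ℕ :=
  (Finset.univ.filter (fun i => a i = true)).card

/-- Probability of an assignment. -/
noncomputable def pr {n : ℕ} (p : Fin n → ℝ) (a : Fin n → Bool) : ℝ :=
  ∏ i, if a i then p i else 1 - p i
/-- Binary decision trees over `n` bits, with natural-number leaf labels. -/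
inductive DTree (n : ℕ) : Type where
  | leaf : ℕ → DTree n
  | node : Fin n → DTree n → DTree n → DTree n

namespace DTree

/-- Output of the tree on assignment `a`. -/
def eval {n : ℕ} : DTree n → (Fin n → Bool) → ℕ
  | .leaf v, _ => v
  | .node i t0 t1, a => if a i then eval t1 a else eval t0 a

/-- Total cost of the queries made on assignment `a`. -/
noncomputable def cost {n : ℕ} (c : Fin n → ℝ) : DTree n → (Fin n → Bool) → ℝ
  | .leaf _, _ => 0
  | .node i t0 t1, a => c i + (if a i then cost c t1 a else cost c t0 a)

/-- The list of indices queried on assignment `a`, in order. -/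
def path {n : ℕ} : DTree n → (Fin n → Bool) → List (Fin n)
  | .leaf _, _ => []
  | .node i t0 t1, a => i :: (if a i then path t1 a else path t0 a)

/-- No index occurs twice on any root-to-leaf path (given already-used indices). -/
def Proper {n : ℕ} : DTree n → Finset (Fin n) → Prop
  | .leaf _, _ => True
  | .node i t0 t1, used =>
      i ∉ used ∧ Proper t0 (insert i used) ∧ Proper t1 (insert i used)

/-- Every root-to-leaf path queries all `n` indices (and no repeats). -/
def Full {n : ℕ} : DTree n → Finset (Fin n) → Prop
  | .leaf _, used => used = Finset.univ
  | .node i t0 t1, used =>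
      i ∉ used ∧ Full t0 (insert i used) ∧ Full t1 (insert i used)

end DTree
/-- Expected-cost-minimizing value over all decision trees evaluating `h`. -/
noncomputable def OPTcost {n : ℕ} (p c : Fin n → ℝ) (h : (Fin n → Bool) → ℕ) : ℝ :=
  sInf {x : ℝ | ∃ T : DTree n, T.Proper ∅ ∧ (∀ a, T.eval a = h a) ∧
    x = ∑ a : Fin n → Bool, T.cost c a * pr p a}

/-- Nonadaptive cost of querying in the order given by the list `l` on assignment `a`:
the total cost of the shortest prefix of `l` whose outcomes determine the value `h a`. -/
noncomputable def naCost {n : ℕ} (c : Fin n → ℝ) (h : (Fin n → Bool) → ℕ)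
    (a : Fin n → Bool) (l : List (Fin n)) : ℝ :=
  ((l.take (sInf {k | ∀ b : Fin n → Bool,
      (∀ i ∈ l.take k, b i = a i) → h b = h a})).map c).sum

/-- Expected nonadaptive cost of the query order `l` for evaluating `h`. -/
noncomputable def naExpCost {n : ℕ} (p c : Fin n → ℝ) (h : (Fin n → Bool) → ℕ)
    (l : List (Fin n)) : ℝ :=
  ∑ a : Fin n → Bool, naCost c h a l * pr p a

/-- The modified round-robin merge of Allen et al.: maintaining counters `C0`, `C1`,
repeatedly pick the next not-yet-chosen index of whichever order has smaller
counter-plus-next-cost (ties to the first list), and charge its cost to that counter. -/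
noncomputable def mrrList {n : ℕ} (c : Fin n → ℝ) :
    List (Fin n) → List (Fin n) → ℝ → ℝ → List (Fin n)
  | [], l1, _, _ => l1
  | j0 :: l0, [], _, _ => j0 :: l0
  | j0 :: l0, j1 :: l1, C0, C1 =>
    if C0 + c j0 ≤ C1 + c j1 then
      j0 :: mrrList c l0 ((j1 :: l1).filter (fun x => x ≠ j0)) (C0 + c j0) C1
    else
      j1 :: mrrList c ((j0 :: l0).filter (fun x => x ≠ j1)) l1 C0 (C1 + c j1)
  termination_by l0 l1 _ _ => l0.length + l1.length
  decreasing_by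
    · have := List.length_filter_le (fun x => decide (x ≠ j0)) (j1 :: l1)
      simp only [List.length_cons] at *
      omega
    · have := List.length_filter_le (fun x => decide (x ≠ j1)) (j0 :: l0)
      simp only [List.length_cons] at *
      omega


namespace SC
variable {n : ℕ}

noncomputable def lcost (c : Fin n → ℝ) (l : List (Fin n)) : ℝ := (l.map c).sum

noncomputable def wcost (c : Fin n → ℝ) (b : Bool) : ℕ → List (Fin n) → (Fin n → Bool) → ℝ
  | _, [], _ => 0
  | 0, _ :: _, _ => 0
  | (t+1), i :: l, a => c i + wcost c b (if a i = b then t else t+1) l a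

def kneed (b : Bool) (a : Fin n → Bool) : ℕ → List (Fin n) → ℕ
  | _, [] => 0
  | 0, _ :: _ => 0
  | (t+1), i :: l => 1 + kneed b a (if a i = b then t else t+1) l

def tcnt (b : Bool) (a : Fin n → Bool) (l : List (Fin n)) : ℕ := l.countP (fun i => a i = b)

noncomputable def EW (c q : Fin n → ℝ) : ℕ → List (Fin n) → ℝ
  | _, [] => 0
  | 0, _ :: _ => 0
  | (t+1), i :: l => c i + q i * EW c q t l + (1 - q i) * EW c q (t+1) l

variable {c : Fin n → ℝ} {b : Bool} {a : Fin n → Bool}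

@[simp] lemma lcost_nil : lcost c [] = 0 := rfl
@[simp] lemma lcost_cons {i : Fin n} {l} : lcost c (i :: l) = c i + lcost c l := rfl

lemma lcost_append {l₁ l₂ : List (Fin n)} : lcost c (l₁ ++ l₂) = lcost c l₁ + lcost c l₂ := by
  simp [lcost]

lemma lcost_nonneg (hc : ∀ i, 0 ≤ c i) (l : List (Fin n)) : 0 ≤ lcost c l := by
  induction l with
  | nil => simp
  | cons i l ih => simpa using add_nonneg (hc i) ih

lemma lcost_sublist_le (hc : ∀ i, 0 ≤ c i) {l₁ l₂ : List (Fin n)} (h : l₁.Sublist l₂) :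
    lcost c l₁ ≤ lcost c l₂ := by
  refine List.Sublist.sum_le_sum (h.map c) ?_
  intro x hx
  obtain ⟨i, _, rfl⟩ := List.mem_map.1 hx
  exact hc i

lemma lcost_take_mono (hc : ∀ i, 0 ≤ c i) {l : List (Fin n)} {k m : ℕ} (h : k ≤ m) :
    lcost c (l.take k) ≤ lcost c (l.take m) :=
  lcost_sublist_le hc (List.take_sublist_take_left h)

@[simp] lemma wcost_nil {t : ℕ} : wcost c b t [] a = 0 := by cases t <;> rfl
@[simp] lemma wcost_zero {l : List (Fin n)} : wcost c b 0 l a = 0 := by cases l <;> rfl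
lemma wcost_cons {t : ℕ} {i : Fin n} {l} :
    wcost c b (t+1) (i :: l) a = c i + wcost c b (if a i = b then t else t+1) l a := rfl

lemma wcost_nonneg (hc : ∀ i, 0 ≤ c i) (t : ℕ) (l : List (Fin n)) :
    0 ≤ wcost c b t l a := by
  induction l generalizing t with
  | nil => simp
  | cons i l ih =>
    cases t with
    | zero => simp
    | succ t => rw [wcost_cons]; exact add_nonneg (hc i) (ih _)

@[simp] lemma tcnt_nil : tcnt b a [] = 0 := rfl
lemma tcnt_cons {i : Fin n} {l} :
    tcnt b a (i :: l) = (if a i = b then 1 else 0) + tcnt b a l := by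
  simp only [tcnt, List.countP_cons]
  by_cases h : a i = b <;> simp [h] <;> omega

lemma wcost_eq_lcost_of_lt {t : ℕ} {l : List (Fin n)} (h : tcnt b a l < t) :
    wcost c b t l a = lcost c l := by
  induction l generalizing t with
  | nil => simp
  | cons i l ih =>
    cases t with
    | zero => omega
    | succ t =>
      rw [wcost_cons, lcost_cons, tcnt_cons] at *
      by_cases hi : a i = b <;> simp only [hi, if_true, if_false] at h ⊢
      · rw [ih (by omega)]
      · rw [ih (by omega)]

lemma wcost_le_lcost_take {t k : ℕ} {l : List (Fin n)} (hc : ∀ i, 0 ≤ c i)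
    (h : t ≤ tcnt b a (l.take k)) :
    wcost c b t l a ≤ lcost c (l.take k) := by
  induction l generalizing t k with
  | nil => simp
  | cons i l ih =>
    cases t with
    | zero => simpa using lcost_nonneg hc _
    | succ t =>
      cases k with
      | zero => simp [tcnt] at h
      | succ k =>
        simp only [List.take_succ_cons, tcnt_cons, lcost_cons] at h ⊢
        rw [wcost_cons]
        by_cases hi : a i = b <;> simp only [hi, if_true, if_false] at h ⊢
        · exact add_le_add_right (ih (t := t) (k := k) (by omega)) _
        · exact add_le_add_right (ih (t := t+1) (k := k) (by omega)) _

@[simp] lemma kneed_nil {t : ℕ} : kneed b a t [] = 0 := by cases t <;> rfl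
@[simp] lemma kneed_zero {l : List (Fin n)} : kneed b a 0 l = 0 := by cases l <;> rfl
lemma kneed_cons {t : ℕ} {i : Fin n} {l} :
    kneed b a (t+1) (i :: l) = 1 + kneed b a (if a i = b then t else t+1) l := rfl

lemma lcost_take_kneed {t : ℕ} {l : List (Fin n)} :
    lcost c (l.take (kneed b a t l)) = wcost c b t l a := by
  induction l generalizing t with
  | nil => simp
  | cons i l ih =>
    cases t with
    | zero => simp
    | succ t =>
      rw [kneed_cons, wcost_cons]
      by_cases hi : a i = b <;> simp only [hi, if_true, if_false]
      · rw [add_comm 1, List.take_succ_cons, lcost_cons, ih]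
      · rw [add_comm 1, List.take_succ_cons, lcost_cons, ih]

lemma tcnt_take_kneed {t : ℕ} {l : List (Fin n)} (h : t ≤ tcnt b a l) :
    t ≤ tcnt b a (l.take (kneed b a t l)) := by
  induction l generalizing t with
  | nil => simpa using h
  | cons i l ih =>
    cases t with
    | zero => simp
    | succ t =>
      rw [kneed_cons]
      rw [tcnt_cons] at h
      by_cases hi : a i = b <;> simp only [hi, if_true, if_false] at h ⊢
      · rw [add_comm 1, List.take_succ_cons, tcnt_cons]
        have := ih (t := t) (by omega)
        simp only [hi, if_true]
        omega
      · rw [add_comm 1, List.take_succ_cons, tcnt_cons]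
        have := ih (t := t+1) (by omega)
        simp only [hi, if_false]
        omega

lemma wcost_update {t : ℕ} {l : List (Fin n)} {i : Fin n} {v : Bool} (h : i ∉ l) :
    wcost c b t l (Function.update a i v) = wcost c b t l a := by
  induction l generalizing t with
  | nil => simp
  | cons j l ih =>
    have hij : j ≠ i := fun hh => h (hh ▸ List.mem_cons_self (a := j) (l := l))
    have hmem : i ∉ l := fun hh => h (List.mem_cons_of_mem _ hh)
    cases t with
    | zero => simp
    | succ t =>
      rw [wcost_cons, wcost_cons, Function.update_of_ne hij, ih hmem]

variable {n : ℕ} {p : Fin n → ℝ}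

lemma pr_nonneg (hp : ∀ i, 0 < p i ∧ p i < 1) (a : Fin n → Bool) : 0 ≤ pr p a := by
  refine Finset.prod_nonneg fun i _ => ?_
  rcases hp i with ⟨h1, h2⟩
  by_cases h : a i <;> simp [h] <;> linarith

lemma pr_sum_one : ∑ a : Fin n → Bool, pr p a = 1 := by
  have h := Finset.prod_univ_sum (fun _ : Fin n => (Finset.univ : Finset Bool))
    (fun i b => if b then p i else 1 - p i)
  rw [Fintype.piFinset_univ] at h
  have h2 : ∀ i : Fin n, (∑ b : Bool, if b then p i else 1 - p i) = 1 := by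
    intro i; simp [Fintype.sum_bool]
  rw [Finset.prod_congr rfl (fun i _ => h2 i)] at h
  simpa [pr] using h.symm

lemma pr_update (a : Fin n → Bool) (i : Fin n) (v : Bool) :
    pr p (Function.update a i v) =
      (if v then p i else 1 - p i) * ∏ j ∈ Finset.univ \ {i}, (if a j then p j else 1 - p j) := by
  have : (fun j => if Function.update a i v j then p j else 1 - p j)
      = Function.update (fun j => if a j then p j else 1 - p j) i (if v then p i else 1 - p i) := by
    funext j
    by_cases h : j = i
    · subst h; simp
    · simp [Function.update_of_ne h]
  rw [pr]
  calc (∏ j, if Function.update a i v j then p j else 1 - p j)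
      = ∏ j, Function.update (fun j => if a j then p j else 1 - p j) i
          (if v then p i else 1 - p i) j := by rw [this]
    _ = _ := Finset.prod_update_of_mem (Finset.mem_univ i) _ _

/-- Marginalization: summing over assignments with `a i = b` picks up factor `q b`. -/
lemma sum_filter_eq_mul (i : Fin n) (b : Bool) (F : (Fin n → Bool) → ℝ)
    (hF : ∀ a v, F (Function.update a i v) = F a) :
    ∑ a ∈ Finset.univ.filter (fun a : Fin n → Bool => a i = b), F a * pr p a
      = (if b then p i else 1 - p i) * ∑ a : Fin n → Bool, F a * pr p a := by
  set q : Bool → ℝ := fun v => if v then p i else 1 - p i with hq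
  have hqsum : q b + q (!b) = 1 := by cases b <;> simp [hq] <;> ring
  have key : ∑ a ∈ Finset.univ.filter (fun a : Fin n → Bool => ¬ (a i = b)), q b * (F a * pr p a)
      = ∑ a ∈ Finset.univ.filter (fun a : Fin n → Bool => a i = b), q (!b) * (F a * pr p a) := by
    refine Finset.sum_nbij' (fun a => Function.update a i b)
      (fun a => Function.update a i (!b)) ?_ ?_ ?_ ?_ ?_
    · intro a ha; simp at ha ⊢
    · intro a ha; simp at ha ⊢
    · intro a ha
      simp only [Finset.mem_filter, Finset.mem_univ, true_and] at ha
      funext j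
      by_cases h : j = i
      · subst h; simp [Bool.not_eq, Bool.eq_not_iff] at ha ⊢
        cases hb : a j <;> cases b <;> simp_all
      · simp [Function.update_of_ne h]
    · intro a ha
      simp only [Finset.mem_filter, Finset.mem_univ, true_and] at ha
      funext j
      by_cases h : j = i
      · subst h; simp [ha]
      · simp [Function.update_of_ne h]
    · intro a ha
      simp only [Finset.mem_filter, Finset.mem_univ, true_and] at ha
      rw [hF, pr_update]
      have : pr p a = pr p (Function.update a i (!b)) := by
        have : a = Function.update a i (!b) := by
          funext j
          by_cases h : j = i
          · subst h; simp [Bool.not_eq, Bool.eq_not_iff] at ha ⊢; simp [ha]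
          · simp [Function.update_of_ne h]
        rw [← this]
      rw [this, pr_update]
      ring
  have split := Finset.sum_filter_add_sum_filter_not Finset.univ
    (fun a : Fin n → Bool => a i = b) (fun a => F a * pr p a)
  rw [← Finset.mul_sum, ← Finset.mul_sum] at key
  show _ = q b * _
  rw [← split, mul_add, key]
  linear_combination (-1 : ℝ) * (∑ a ∈ Finset.univ.filter (fun a : Fin n → Bool => a i = b),
    F a * pr p a) * hqsum

/-- Conditioning on coordinate `i`. -/
lemma sum_cond (i : Fin n) (b : Bool) (F G : (Fin n → Bool) → ℝ)
    (hF : ∀ a v, F (Function.update a i v) = F a)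
    (hG : ∀ a v, G (Function.update a i v) = G a) :
    ∑ a : Fin n → Bool, (if a i = b then F a else G a) * pr p a
      = (if b then p i else 1 - p i) * ∑ a : Fin n → Bool, F a * pr p a
        + (1 - (if b then p i else 1 - p i)) * ∑ a : Fin n → Bool, G a * pr p a := by
  have split := Finset.sum_filter_add_sum_filter_not Finset.univ
    (fun a : Fin n → Bool => a i = b)
    (fun a => (if a i = b then F a else G a) * pr p a)
  rw [← split]
  have h1 : ∑ a ∈ Finset.univ.filter (fun a : Fin n → Bool => a i = b),
      (if a i = b then F a else G a) * pr p a
      = ∑ a ∈ Finset.univ.filter (fun a : Fin n → Bool => a i = b), F a * pr p a := by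
    refine Finset.sum_congr rfl fun a ha => ?_
    simp only [Finset.mem_filter] at ha
    rw [if_pos ha.2]
  have h2 : ∑ a ∈ Finset.univ.filter (fun a : Fin n → Bool => ¬ (a i = b)),
      (if a i = b then F a else G a) * pr p a
      = ∑ a ∈ Finset.univ.filter (fun a : Fin n → Bool => ¬ (a i = b)), G a * pr p a := by
    refine Finset.sum_congr rfl fun a ha => ?_
    simp only [Finset.mem_filter] at ha
    rw [if_neg ha.2]
  rw [h1, h2, sum_filter_eq_mul i b F hF]
  have h3 : ∑ a ∈ Finset.univ.filter (fun a : Fin n → Bool => ¬ (a i = b)), G a * pr p a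
      = (1 - (if b then p i else 1 - p i)) * ∑ a : Fin n → Bool, G a * pr p a := by
    have split2 := Finset.sum_filter_add_sum_filter_not Finset.univ
      (fun a : Fin n → Bool => a i = b) (fun a => G a * pr p a)
    have := sum_filter_eq_mul (p := p) i b G hG
    have goal : ∑ a ∈ Finset.univ.filter (fun a : Fin n → Bool => ¬ (a i = b)), G a * pr p a
        = ∑ a : Fin n → Bool, G a * pr p a
          - (if b then p i else 1 - p i) * ∑ a : Fin n → Bool, G a * pr p a := by
      rw [← split2] at this ⊢
      linarith [this]
    rw [goal]; ring
  rw [h3]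


variable {n : ℕ} {p c q : Fin n → ℝ} {bb : Bool} {a : Fin n → Bool}

@[simp] lemma EW_nil {t : ℕ} : EW c q t [] = 0 := by cases t <;> rfl
@[simp] lemma EW_zero {l : List (Fin n)} : EW c q 0 l = 0 := by cases l <;> rfl
lemma EW_cons {t : ℕ} {i : Fin n} {l} :
    EW c q (t+1) (i :: l) = c i + q i * EW c q t l + (1 - q i) * EW c q (t+1) l := rfl

lemma sum_wcost_eq_EW {l : List (Fin n)} (hl : l.Nodup) (t : ℕ) :
    ∑ a : Fin n → Bool, wcost c bb t l a * pr p a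
      = EW c (fun i => if bb then p i else 1 - p i) t l := by
  induction l generalizing t with
  | nil => simp
  | cons i l ih =>
    have hnd := List.nodup_cons.1 hl
    cases t with
    | zero => simp
    | succ t =>
      have step : ∀ a : Fin n → Bool, wcost c bb (t+1) (i::l) a * pr p a
          = c i * pr p a
            + (if a i = bb then wcost c bb t l a else wcost c bb (t+1) l a) * pr p a := by
        intro a; rw [wcost_cons]
        by_cases h : a i = bb <;> simp only [h, if_true, if_false] <;> ring
      rw [Finset.sum_congr rfl (fun a _ => step a), Finset.sum_add_distrib,
        ← Finset.mul_sum, pr_sum_one, mul_one,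
        sum_cond i bb _ _ (fun a v => wcost_update hnd.1) (fun a v => wcost_update hnd.1),
        ih hnd.2, ih hnd.2, EW_cons]
      ring

lemma EW_swap (hq : ∀ i, 0 ≤ q i ∧ q i ≤ 1) {x y : Fin n} {S : List (Fin n)}
    (hxy : c x * q y ≤ c y * q x) (t : ℕ) :
    EW c q t (x :: y :: S) ≤ EW c q t (y :: x :: S) := by
  match t with
  | 0 => simp
  | 1 =>
    simp only [EW_cons, EW_zero, mul_zero, add_zero]
    have h1 := (hq x).1; have h2 := (hq x).2
    have h3 := (hq y).1; have h4 := (hq y).2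
    nlinarith [hxy]
  | (t+2) =>
    simp only [EW_cons]
    ring_nf
    nlinarith [le_refl (0:ℝ)]

lemma EW_cons_mono (hq : ∀ i, 0 ≤ q i ∧ q i ≤ 1) {h : Fin n} {M M' : List (Fin n)}
    (hMM : ∀ t, EW c q t M ≤ EW c q t M') (t : ℕ) :
    EW c q t (h :: M) ≤ EW c q t (h :: M') := by
  cases t with
  | zero => simp
  | succ t =>
    rw [EW_cons, EW_cons]
    have h1 := (hq h).1; have h2 := (hq h).2
    have := hMM t; have := hMM (t+1)
    nlinarith

lemma EW_move (hq : ∀ i, 0 ≤ q i ∧ q i ≤ 1) {L : List (Fin n)} {x : Fin n}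
    (hx : x ∈ L) (hmin : ∀ y ∈ L, c x * q y ≤ c y * q x) (t : ℕ) :
    EW c q t (x :: L.erase x) ≤ EW c q t L := by
  induction L generalizing t with
  | nil => cases hx
  | cons y M ih =>
    by_cases hxy : x = y
    · subst hxy
      rw [List.erase_cons_head]
    · have hxM : x ∈ M := by
        rcases List.mem_cons.1 hx with h | h
        · exact absurd h hxy
        · exact h
      rw [List.erase_cons_tail]
      · calc EW c q t (x :: y :: M.erase x)
            ≤ EW c q t (y :: x :: M.erase x) :=
              EW_swap hq (hmin y (List.mem_cons_self)) t
          _ ≤ EW c q t (y :: M) :=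
              EW_cons_mono hq (fun t' => ih hxM
                (fun z hz => hmin z (List.mem_cons_of_mem _ hz)) t') t
      · simp [Ne.symm hxy]

lemma EW_sorted_le (hq : ∀ i, 0 ≤ q i ∧ q i ≤ 1) :
    ∀ {l L : List (Fin n)}, l.Pairwise (fun i j => c i * q j ≤ c j * q i) →
      l.Perm L → ∀ t, EW c q t l ≤ EW c q t L := by
  intro l
  induction l with
  | nil =>
    intro L _ hperm t
    rw [(List.Perm.nil_eq hperm : [] = L).symm]
  | cons x l' ih =>
    intro L hpair hperm t
    have hx : x ∈ L := hperm.mem_iff.1 (List.mem_cons_self)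
    have hLerase : L.Perm (x :: L.erase x) := List.perm_cons_erase hx
    have hl'perm : l'.Perm (L.erase x) :=
      (List.perm_cons x).1 (hperm.trans hLerase)
    have hmin : ∀ y ∈ L, c x * q y ≤ c y * q x := by
      intro y hy
      rcases List.mem_cons.1 (hperm.mem_iff.2 hy) with h | h
      · subst h; exact le_refl _
      · exact (List.pairwise_cons.1 hpair).1 y h
    calc EW c q t (x :: l')
        ≤ EW c q t (x :: L.erase x) :=
          EW_cons_mono hq (ih (List.pairwise_cons.1 hpair).2 hl'perm) t
      _ ≤ EW c q t L := EW_move hq hx hmin t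


variable {n : ℕ} {a b : Fin n → Bool} {c : Fin n → ℝ}

lemma alpha_mono {B : ℕ} {α : ℕ → ℕ} (hmono : ∀ j, 1 ≤ j → j ≤ B → α j < α (j + 1))
    {i j : ℕ} (h1 : 1 ≤ i) (h2 : i ≤ j) (h3 : j ≤ B + 1) : α i ≤ α j := by
  induction j with
  | zero => omega
  | succ j ih =>
    rcases Nat.lt_or_ge i (j+1) with h | h
    · have : α i ≤ α j := ih (by omega) (by omega)
      have : α j < α (j+1) := hmono j (by omega) (by omega)
      omega
    · have : i = j + 1 := by omega
      rw [this]

/-- Uniqueness of the score class. -/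
lemma f_unique {B : ℕ} {α : ℕ → ℕ} (hmono : ∀ j, 1 ≤ j → j ≤ B → α j < α (j + 1))
    {j k N : ℕ} (hj1 : 1 ≤ j) (hjB : j ≤ B) (hk1 : 1 ≤ k) (hkB : k ≤ B)
    (h1 : α j ≤ N) (h2 : N < α (j+1)) (h3 : α k ≤ N) (h4 : N < α (k+1)) : j = k := by
  rcases lt_trichotomy j k with h | h | h
  · have : α (j+1) ≤ α k := alpha_mono hmono (by omega) (by omega) (by omega)
    omega
  · exact h
  · have : α (k+1) ≤ α j := alpha_mono hmono (by omega) (by omega) (by omega)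
    omega

lemma tcnt_le_N1 {P : List (Fin n)} (hP : P.Nodup) (hag : ∀ i ∈ P, b i = a i) :
    tcnt true a P ≤ N1 b := by
  have hsub : (P.filter (fun i => a i = true)).toFinset ⊆
      Finset.univ.filter (fun i => b i = true) := by
    intro i hi
    rw [List.mem_toFinset, List.mem_filter] at hi
    simp only [Finset.mem_filter, Finset.mem_univ, true_and]
    rw [hag i hi.1]
    simpa using hi.2
  have hnd : (P.filter (fun i => a i = true)).Nodup := hP.filter _
  calc tcnt true a P = (P.filter (fun i => a i = true)).length := by
        simp [tcnt, List.countP_eq_length_filter]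
    _ = (P.filter (fun i => a i = true)).toFinset.card :=
        (List.toFinset_card_of_nodup hnd).symm
    _ ≤ _ := Finset.card_le_card hsub
    _ = N1 b := rfl

lemma card_false_eq (b : Fin n → Bool) :
    (Finset.univ.filter (fun i => b i = false)).card = n - N1 b := by
  have h := Finset.card_filter_add_card_filter_not
    (s := (Finset.univ : Finset (Fin n))) (fun i => b i = true)
  have he : Finset.univ.filter (fun i => ¬ (b i = true)) =
      Finset.univ.filter (fun i => b i = false) := by
    apply Finset.filter_congr; intro i _; simp
  rw [he] at h
  simp only [Finset.card_univ, Fintype.card_fin] at h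
  unfold N1
  omega

lemma N1_le (b : Fin n → Bool) : N1 b ≤ n := by
  calc N1 b ≤ (Finset.univ : Finset (Fin n)).card := Finset.card_le_card (Finset.filter_subset _ _)
    _ = n := by simp

lemma tcnt_false_le {P : List (Fin n)} (hP : P.Nodup) (hag : ∀ i ∈ P, b i = a i) :
    tcnt false a P ≤ n - N1 b := by
  have hsub : (P.filter (fun i => a i = false)).toFinset ⊆
      Finset.univ.filter (fun i => b i = false) := by
    intro i hi
    rw [List.mem_toFinset, List.mem_filter] at hi
    simp only [Finset.mem_filter, Finset.mem_univ, true_and]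
    rw [hag i hi.1]
    simpa using hi.2
  have hnd : (P.filter (fun i => a i = false)).Nodup := hP.filter _
  calc tcnt false a P = (P.filter (fun i => a i = false)).toFinset.card := by
        rw [List.toFinset_card_of_nodup hnd]; simp [tcnt, List.countP_eq_length_filter]
    _ ≤ (Finset.univ.filter (fun i => b i = false)).card := Finset.card_le_card hsub
    _ = n - N1 b := card_false_eq b

/-- `N1` of the assignment that copies `a` on `P` and is `v` elsewhere. -/
lemma N1_patch (P : List (Fin n)) (hP : P.Nodup) (a : Fin n → Bool) :
    N1 (fun i => if i ∈ P then a i else false) = tcnt true a P := by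
  have : Finset.univ.filter (fun i => (if i ∈ P then a i else false) = true)
      = (P.filter (fun i => a i = true)).toFinset := by
    ext i
    simp only [Finset.mem_filter, Finset.mem_univ, true_and, List.mem_toFinset, List.mem_filter]
    by_cases h : i ∈ P <;> simp [h]
  unfold N1
  rw [this, List.toFinset_card_of_nodup (hP.filter _)]
  simp [tcnt, List.countP_eq_length_filter]

lemma N1_patch_true (P : List (Fin n)) (hP : P.Nodup) (a : Fin n → Bool) :
    n - N1 (fun i => if i ∈ P then a i else true) = tcnt false a P := by
  have : Finset.univ.filter (fun i => (if i ∈ P then a i else true) = false)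
      = (P.filter (fun i => a i = false)).toFinset := by
    ext i
    simp only [Finset.mem_filter, Finset.mem_univ, true_and, List.mem_toFinset, List.mem_filter]
    by_cases h : i ∈ P <;> simp [h]
  have hc := card_false_eq (fun i => if i ∈ P then a i else true)
  rw [this, List.toFinset_card_of_nodup (hP.filter _)] at hc
  rw [← hc]
  simp [tcnt, List.countP_eq_length_filter]

lemma tcnt_add_eq_length (a : Fin n → Bool) (l : List (Fin n)) :
    tcnt true a l + tcnt false a l = l.length := by
  induction l with
  | nil => simp
  | cons i l ih =>
    rw [tcnt_cons, tcnt_cons]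
    cases h : a i <;> simp [h] <;> omega

lemma length_complete {l : List (Fin n)} (hnd : l.Nodup) (hcom : ∀ i, i ∈ l) :
    l.length = n := by
  have : l.toFinset = Finset.univ := by
    ext i; simp [hcom i]
  rw [← List.toFinset_card_of_nodup hnd, this]
  simp

lemma N1_eq_tcnt {l : List (Fin n)} (hnd : l.Nodup) (hcom : ∀ i, i ∈ l) (a : Fin n → Bool) :
    tcnt true a l = N1 a := by
  have : (l.filter (fun i => a i = true)).toFinset
      = Finset.univ.filter (fun i => a i = true) := by
    ext i; simp [hcom i]
  have hnd2 := hnd.filter (fun i => decide (a i = true))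
  calc tcnt true a l = (l.filter (fun i => a i = true)).length := by
        simp [tcnt, List.countP_eq_length_filter]
    _ = (l.filter (fun i => a i = true)).toFinset.card := (List.toFinset_card_of_nodup hnd2).symm
    _ = N1 a := by rw [this]; rfl


variable {n : ℕ}

lemma filter_take_eq (l : List (Fin n)) (k : ℕ) (q : Fin n → Bool) :
    (l.filter q).take ((l.take k).filter q).length = (l.take k).filter q := by
  have h : l.filter q = (l.take k).filter q ++ (l.drop k).filter q := by
    rw [← List.filter_append, List.take_append_drop]
  rw [h, List.take_left]

lemma length_filter_take_le (l : List (Fin n)) (k : ℕ) (q : Fin n → Bool) :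
    ((l.take k).filter q).length ≤ (l.filter q).length := by
  have h : l.filter q = (l.take k).filter q ++ (l.drop k).filter q := by
    rw [← List.filter_append, List.take_append_drop]
  rw [h, List.length_append]
  omega

/-- Core covering lemma for the modified round-robin list. -/
lemma mrr_cover (c : Fin n → ℝ) (hc : ∀ i, 0 < c i) :
    ∀ (N : ℕ) (u v : List (Fin n)), u.length + v.length ≤ N →
    ∀ (C0 C1 : ℝ) (k0 k1 : ℕ), k0 ≤ u.length → k1 ≤ v.length →
    ∃ m, (∀ x ∈ u.take k0, x ∈ (mrrList c u v C0 C1).take m) ∧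
      (∀ x ∈ v.take k1, x ∈ (mrrList c u v C0 C1).take m) ∧
      lcost c ((mrrList c u v C0 C1).take m)
        ≤ 2 * max (C0 + lcost c (u.take k0)) (C1 + lcost c (v.take k1)) - C0 - C1 := by
  have hc' : ∀ i, 0 ≤ c i := fun i => (hc i).le
  intro N
  induction N with
  | zero =>
    intro u v hlen C0 C1 k0 k1 hk0 hk1
    have hu : u = [] := List.length_eq_zero_iff.1 (by omega)
    have hv : v = [] := List.length_eq_zero_iff.1 (by omega)
    subst hu; subst hv
    refine ⟨0, by simp, by simp, ?_⟩
    rw [mrrList]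
    simp only [List.take_nil, lcost_nil, List.take_zero]
    have h1 : C0 + lcost c ([].take k0 : List (Fin n)) ≤ max (C0 + lcost c ([].take k0 : List (Fin n))) (C1 + lcost c ([].take k1 : List (Fin n))) := le_max_left _ _
    have h2 : C1 + lcost c ([].take k1 : List (Fin n)) ≤ max (C0 + lcost c ([].take k0 : List (Fin n))) (C1 + lcost c ([].take k1 : List (Fin n))) := le_max_right _ _
    simp only [List.take_nil, lcost_nil, add_zero] at h1 h2 ⊢
    linarith
  | succ N ih =>
    intro u v hlen C0 C1 k0 k1 hk0 hk1
    match u, v with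
    | [], v =>
      refine ⟨k1, by simp, ?_, ?_⟩
      · rw [mrrList]; intro x hx; exact hx
      · rw [mrrList]
        have h1 : C0 ≤ max (C0 + lcost c (List.take k0 ([] : List (Fin n)))) (C1 + lcost c (v.take k1)) := by
          simp only [List.take_nil, lcost_nil, add_zero]
          exact le_max_left _ _
        have h2 : C1 + lcost c (v.take k1) ≤ max (C0 + lcost c (List.take k0 ([] : List (Fin n)))) (C1 + lcost c (v.take k1)) := le_max_right _ _
        linarith
    | j0 :: u', [] =>
      refine ⟨k0, ?_, by simp, ?_⟩
      · rw [mrrList]; intro x hx; exact hx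
      · rw [mrrList]
        have h1 : C0 + lcost c ((j0 :: u').take k0) ≤ max (C0 + lcost c ((j0 :: u').take k0)) (C1 + lcost c (List.take k1 ([] : List (Fin n)))) := le_max_left _ _
        have h2 : C1 ≤ max (C0 + lcost c ((j0 :: u').take k0)) (C1 + lcost c (List.take k1 ([] : List (Fin n)))) := by
          simp only [List.take_nil, lcost_nil, add_zero]
          exact le_max_right _ _
        linarith
    | j0 :: u', j1 :: v' =>
      by_cases hzero : k0 = 0 ∧ k1 = 0
      · refine ⟨0, by simp [hzero.1], by simp [hzero.2], ?_⟩
        simp only [List.take_zero, lcost_nil, hzero.1, hzero.2, add_zero]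
        have h1 : C0 + lcost c ((j0 :: u').take 0) ≤ max (C0 + lcost c ((j0 :: u').take 0)) (C1 + lcost c ((j1 :: v').take 0)) := le_max_left _ _
        have h2 : C1 + lcost c ((j1 :: v').take 0) ≤ max (C0 + lcost c ((j0 :: u').take 0)) (C1 + lcost c ((j1 :: v').take 0)) := le_max_right _ _
        simp only [List.take_zero, lcost_nil, add_zero] at h1 h2
        linarith
      set R0 := lcost c ((j0 :: u').take k0) with hR0
      set R1 := lcost c ((j1 :: v').take k1) with hR1
      by_cases hbr : C0 + c j0 ≤ C1 + c j1
      · -- pick j0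
        have hout : mrrList c (j0 :: u') (j1 :: v') C0 C1
            = j0 :: mrrList c u' ((j1 :: v').filter (fun x => x ≠ j0)) (C0 + c j0) C1 := by
          rw [mrrList, if_pos hbr]
        set v'' := (j1 :: v').filter (fun x => x ≠ j0) with hv''
        set k1'' := (((j1 :: v').take k1).filter (fun x => x ≠ j0)).length with hk1''
        have htake : v''.take k1'' = ((j1 :: v').take k1).filter (fun x => x ≠ j0) :=
          filter_take_eq _ _ _
        have hlen'' : k1'' ≤ v''.length := by
          rw [hk1'', hv'']
          exact length_filter_take_le _ _ _
        have hlenN : u'.length + v''.length ≤ N := by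
          have h1 : v''.length ≤ (j1 :: v').length := List.length_filter_le _ _
          simp only [List.length_cons] at hlen h1 ⊢
          have := List.length_filter_le (fun x => decide (x ≠ j0)) (j1 :: v')
          simp only [List.length_cons] at this
          omega
        obtain ⟨m', hcov0, hcov1, hcost⟩ :=
          ih u' v'' hlenN (C0 + c j0) C1 (k0 - 1) k1''
            (by simp only [List.length_cons] at hk0; omega) hlen''
        refine ⟨m' + 1, ?_, ?_, ?_⟩
        · rw [hout, List.take_succ_cons]
          intro x hx
          rcases Nat.eq_zero_or_pos k0 with h0 | h0
          · rw [h0] at hx; simp at hx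
          · obtain ⟨k, rfl⟩ : ∃ k, k0 = k + 1 := ⟨k0 - 1, by omega⟩
            rw [List.take_succ_cons] at hx
            rcases List.mem_cons.1 hx with rfl | hx
            · exact List.mem_cons_self
            · exact List.mem_cons_of_mem _ (hcov0 x (by simpa using hx))
        · rw [hout, List.take_succ_cons]
          intro x hx
          by_cases hxj : x = j0
          · subst hxj; exact List.mem_cons_self
          · refine List.mem_cons_of_mem _ (hcov1 x ?_)
            rw [htake, List.mem_filter]
            exact ⟨hx, by simp [hxj]⟩
        · rw [hout, List.take_succ_cons, lcost_cons]
          have hR1'' : lcost c (v''.take k1'') ≤ R1 := by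
            rw [htake, hR1]
            exact lcost_sublist_le hc' (List.filter_sublist)
          have hmax : max (C0 + c j0 + lcost c (u'.take (k0 - 1))) (C1 + lcost c (v''.take k1''))
              ≤ max (C0 + R0) (C1 + R1) := by
            rcases Nat.eq_zero_or_pos k0 with h0 | h0
            · -- k0 = 0, so k1 ≥ 1
              have hk1pos : 1 ≤ k1 := by
                rcases Nat.eq_zero_or_pos k1 with h1 | h1
                · exact absurd ⟨h0, h1⟩ hzero
                · exact h1
              have hcj1R1 : c j1 ≤ R1 := by
                obtain ⟨k, rfl⟩ : ∃ k, k1 = k + 1 := ⟨k1 - 1, by omega⟩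
                rw [hR1, List.take_succ_cons, lcost_cons]
                have := lcost_nonneg hc' (v'.take k)
                linarith
              have h1 : C0 + c j0 + lcost c (u'.take (k0 - 1)) ≤ C1 + R1 := by
                rw [h0]; simp only [Nat.zero_sub, List.take_zero, lcost_nil, add_zero]
                linarith
              have h2 : C1 + lcost c (v''.take k1'') ≤ C1 + R1 := by linarith
              exact max_le (h1.trans (le_max_right _ _)) (h2.trans (le_max_right _ _))
            · obtain ⟨k, rfl⟩ : ∃ k, k0 = k + 1 := ⟨k0 - 1, by omega⟩
              have h1 : C0 + c j0 + lcost c (u'.take (k + 1 - 1)) = C0 + R0 := by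
                rw [hR0, List.take_succ_cons, lcost_cons]
                simp only [Nat.add_sub_cancel]
                ring
              have h2 : C1 + lcost c (v''.take k1'') ≤ C1 + R1 := by linarith
              rw [h1]
              exact max_le (le_max_left _ _) (h2.trans (le_max_right _ _))
          calc c j0 + lcost c ((mrrList c u' v'' (C0 + c j0) C1).take m')
              ≤ c j0 + (2 * max (C0 + c j0 + lcost c (u'.take (k0 - 1)))
                  (C1 + lcost c (v''.take k1'')) - (C0 + c j0) - C1) := by linarith
            _ = 2 * max (C0 + c j0 + lcost c (u'.take (k0 - 1)))
                  (C1 + lcost c (v''.take k1'')) - C0 - C1 := by ring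
            _ ≤ 2 * max (C0 + R0) (C1 + R1) - C0 - C1 := by linarith
      · -- pick j1
        have hbr' : ¬ (C0 + c j0 ≤ C1 + c j1) := hbr
        have hout : mrrList c (j0 :: u') (j1 :: v') C0 C1
            = j1 :: mrrList c ((j0 :: u').filter (fun x => x ≠ j1)) v' C0 (C1 + c j1) := by
          rw [mrrList, if_neg hbr']
        set u'' := (j0 :: u').filter (fun x => x ≠ j1) with hu''
        set k0'' := (((j0 :: u').take k0).filter (fun x => x ≠ j1)).length with hk0''
        have htake : u''.take k0'' = ((j0 :: u').take k0).filter (fun x => x ≠ j1) :=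
          filter_take_eq _ _ _
        have hlen'' : k0'' ≤ u''.length := by
          rw [hk0'', hu'']
          exact length_filter_take_le _ _ _
        have hlenN : u''.length + v'.length ≤ N := by
          have := List.length_filter_le (fun x => decide (x ≠ j1)) (j0 :: u')
          simp only [List.length_cons] at hlen this ⊢
          have h1 : u''.length ≤ (j0 :: u').length := List.length_filter_le _ _
          simp only [List.length_cons] at h1
          omega
        obtain ⟨m', hcov0, hcov1, hcost⟩ :=
          ih u'' v' hlenN C0 (C1 + c j1) k0'' (k1 - 1) hlen''
            (by simp only [List.length_cons] at hk1; omega)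
        refine ⟨m' + 1, ?_, ?_, ?_⟩
        · rw [hout, List.take_succ_cons]
          intro x hx
          by_cases hxj : x = j1
          · subst hxj; exact List.mem_cons_self
          · refine List.mem_cons_of_mem _ (hcov0 x ?_)
            rw [htake, List.mem_filter]
            exact ⟨hx, by simp [hxj]⟩
        · rw [hout, List.take_succ_cons]
          intro x hx
          rcases Nat.eq_zero_or_pos k1 with h0 | h0
          · rw [h0] at hx; simp at hx
          · obtain ⟨k, rfl⟩ : ∃ k, k1 = k + 1 := ⟨k1 - 1, by omega⟩
            rw [List.take_succ_cons] at hx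
            rcases List.mem_cons.1 hx with rfl | hx
            · exact List.mem_cons_self
            · exact List.mem_cons_of_mem _ (hcov1 x (by simpa using hx))
        · rw [hout, List.take_succ_cons, lcost_cons]
          have hR0'' : lcost c (u''.take k0'') ≤ R0 := by
            rw [htake, hR0]
            exact lcost_sublist_le hc' (List.filter_sublist)
          have hmax : max (C0 + lcost c (u''.take k0'')) (C1 + c j1 + lcost c (v'.take (k1 - 1)))
              ≤ max (C0 + R0) (C1 + R1) := by
            rcases Nat.eq_zero_or_pos k1 with h0 | h0
            · have hk0pos : 1 ≤ k0 := by
                rcases Nat.eq_zero_or_pos k0 with h1 | h1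
                · exact absurd ⟨h1, h0⟩ hzero
                · exact h1
              have hcj0R0 : c j0 ≤ R0 := by
                obtain ⟨k, rfl⟩ : ∃ k, k0 = k + 1 := ⟨k0 - 1, by omega⟩
                rw [hR0, List.take_succ_cons, lcost_cons]
                have := lcost_nonneg hc' (u'.take k)
                linarith
              have h1 : C1 + c j1 + lcost c (v'.take (k1 - 1)) ≤ C0 + R0 := by
                rw [h0]; simp only [Nat.zero_sub, List.take_zero, lcost_nil, add_zero]
                push_neg at hbr'
                linarith
              have h2 : C0 + lcost c (u''.take k0'') ≤ C0 + R0 := by linarith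
              exact max_le (h2.trans (le_max_left _ _)) (h1.trans (le_max_left _ _))
            · obtain ⟨k, rfl⟩ : ∃ k, k1 = k + 1 := ⟨k1 - 1, by omega⟩
              have h1 : C1 + c j1 + lcost c (v'.take (k + 1 - 1)) = C1 + R1 := by
                rw [hR1, List.take_succ_cons, lcost_cons]
                simp only [Nat.add_sub_cancel]
                ring
              have h2 : C0 + lcost c (u''.take k0'') ≤ C0 + R0 := by linarith
              rw [h1]
              exact max_le (h2.trans (le_max_left _ _)) (le_max_right _ _)
          calc c j1 + lcost c ((mrrList c u'' v' C0 (C1 + c j1)).take m')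
              ≤ c j1 + (2 * max (C0 + lcost c (u''.take k0''))
                  (C1 + c j1 + lcost c (v'.take (k1 - 1))) - C0 - (C1 + c j1)) := by linarith
            _ = 2 * max (C0 + lcost c (u''.take k0''))
                  (C1 + c j1 + lcost c (v'.take (k1 - 1))) - C0 - C1 := by ring
            _ ≤ 2 * max (C0 + R0) (C1 + R1) - C0 - C1 := by linarith


lemma kneed_le_length {b : Bool} {a : Fin n → Bool} (t : ℕ) (l : List (Fin n)) :
    kneed b a t l ≤ l.length := by
  induction l generalizing t with
  | nil => simp
  | cons i l ih =>
    cases t with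
    | zero => simp
    | succ t =>
      rw [kneed_cons]
      by_cases h : a i = b
      · simp only [h, if_true, List.length_cons]
        have := ih (t := t); omega
      · simp only [h, if_false, List.length_cons]
        have := ih (t := t+1); omega

lemma lcost_perm {c : Fin n → ℝ} {l l' : List (Fin n)} (h : l.Perm l') :
    lcost c l = lcost c l' := List.Perm.sum_eq (h.map c)

end SC

theorem stmt9 {n : ℕ} (hn : 1 ≤ n) (p c : Fin n → ℝ)
    (hp : ∀ i, 0 < p i ∧ p i < 1) (hc : ∀ i, 0 < c i)
    (B : ℕ) (hB : 2 ≤ B) (α : ℕ → ℕ)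
    (hα1 : α 1 = 0) (hαtop : α (B + 1) = n + 1)
    (hmono : ∀ j, 1 ≤ j → j ≤ B → α j < α (j + 1))
    (f : (Fin n → Bool) → ℕ)
    (hf : ∀ a, 1 ≤ f a ∧ f a ≤ B ∧ α (f a) ≤ N1 a ∧ N1 a < α (f a + 1))
    (l1 l0 : List (Fin n))
    (hl1 : l1.Nodup ∧ (∀ i, i ∈ l1) ∧
      l1.Pairwise (fun i j => c i / p i ≤ c j / p j))
    (hl0 : l0.Nodup ∧ (∀ i, i ∈ l0) ∧
      l0.Pairwise (fun i j => c i / (1 - p i) ≤ c j / (1 - p j))) :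
    ∀ τ : Equiv.Perm (Fin n),
      naExpCost p c f (mrrList c l0 l1 0 0) ≤
        2 * ((B : ℝ) - 1) * naExpCost p c f (List.ofFn (fun t => τ t)) := by
  classical
  intro τ
  obtain ⟨hl1nd, hl1com, hl1sort⟩ := hl1
  obtain ⟨hl0nd, hl0com, hl0sort⟩ := hl0
  set T : List (Fin n) := List.ofFn (fun t => τ t) with hT
  have hc' : ∀ i, 0 ≤ c i := fun i => (hc i).le
  have hTnd : T.Nodup := List.nodup_ofFn.mpr τ.injective
  have hTcom : ∀ i, i ∈ T := fun i => List.mem_ofFn.2 ⟨τ.symm i, τ.apply_symm_apply i⟩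
  have hperm1 : l1.Perm T := List.perm_of_nodup_nodup_toFinset_eq hl1nd hTnd
    (by ext i; simp [hl1com i, hTcom i])
  have hperm0 : l0.Perm T := List.perm_of_nodup_nodup_toFinset_eq hl0nd hTnd
    (by ext i; simp [hl0com i, hTcom i])
  have hαm : ∀ i j, 1 ≤ i → i ≤ j → j ≤ B + 1 → α i ≤ α j :=
    fun i j h1 h2 h3 => SC.alpha_mono hmono h1 h2 h3
  have htcnt1 : ∀ (l : List (Fin n)), l.Nodup → (∀ i, i ∈ l) →
      ∀ a, SC.tcnt true a l = N1 a := fun l h1 h2 a => SC.N1_eq_tcnt h1 h2 a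
  have htcnt0 : ∀ (l : List (Fin n)), l.Nodup → (∀ i, i ∈ l) →
      ∀ a, SC.tcnt false a l = n - N1 a := by
    intro l h1 h2 a
    have ha := SC.tcnt_add_eq_length a l
    have hb := SC.N1_eq_tcnt h1 h2 a
    have hcc := SC.length_complete h1 h2
    have := SC.N1_le a
    omega
  have hN1le : ∀ a : Fin n → Bool, N1 a ≤ n := SC.N1_le
  have hα_fa_le : ∀ a : Fin n → Bool, α (f a + 1) ≤ n + 1 := by
    intro a
    rw [← hαtop]
    exact hαm (f a + 1) (B+1) (by omega) (by have := (hf a).2.1; omega) le_rfl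
  -- MAIN1 : pointwise bound on the cost of the MRR list
  have MAIN1 : ∀ a, naCost c f a (mrrList c l0 l1 0 0)
      ≤ 2 * (SC.wcost c false (n + 1 - α (f a + 1)) l0 a
          + SC.wcost c true (α (f a)) l1 a) := by
    intro a
    have ht1 : α (f a) ≤ SC.tcnt true a l1 := by
      rw [htcnt1 l1 hl1nd hl1com]; exact (hf a).2.2.1
    have hm0 : n + 1 - α (f a + 1) ≤ SC.tcnt false a l0 := by
      rw [htcnt0 l0 hl0nd hl0com]
      have h2 := (hf a).2.2.2
      have := hN1le a
      have := hα_fa_le a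
      omega
    obtain ⟨m, hcov0, hcov1, hcost⟩ := SC.mrr_cover c hc (l0.length + l1.length) l0 l1
      le_rfl 0 0 (SC.kneed false a (n + 1 - α (f a + 1)) l0) (SC.kneed true a (α (f a)) l1)
      (SC.kneed_le_length _ _) (SC.kneed_le_length _ _)
    have hs0 : SC.lcost c (l0.take (SC.kneed false a (n + 1 - α (f a + 1)) l0))
        = SC.wcost c false (n + 1 - α (f a + 1)) l0 a := SC.lcost_take_kneed
    have hs1 : SC.lcost c (l1.take (SC.kneed true a (α (f a)) l1))
        = SC.wcost c true (α (f a)) l1 a := SC.lcost_take_kneed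
    have hw0 : 0 ≤ SC.wcost c false (n + 1 - α (f a + 1)) l0 a := SC.wcost_nonneg hc' _ _
    have hw1 : 0 ≤ SC.wcost c true (α (f a)) l1 a := SC.wcost_nonneg hc' _ _
    have hmem : m ∈ {k | ∀ bb : Fin n → Bool,
        (∀ i ∈ (mrrList c l0 l1 0 0).take k, bb i = a i) → f bb = f a} := by
      intro bb hag
      have hag1 : ∀ i ∈ l1.take (SC.kneed true a (α (f a)) l1), bb i = a i :=
        fun i hi => hag i (hcov1 i hi)
      have hag0 : ∀ i ∈ l0.take (SC.kneed false a (n + 1 - α (f a + 1)) l0), bb i = a i :=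
        fun i hi => hag i (hcov0 i hi)
      have hub : α (f a) ≤ N1 bb :=
        le_trans (SC.tcnt_take_kneed ht1)
          (SC.tcnt_le_N1 (hl1nd.sublist (List.take_sublist _ _)) hag1)
      have hlb : n + 1 - α (f a + 1) ≤ n - N1 bb :=
        le_trans (SC.tcnt_take_kneed hm0)
          (SC.tcnt_false_le (hl0nd.sublist (List.take_sublist _ _)) hag0)
      have h5 := hf bb
      refine SC.f_unique hmono h5.1 h5.2.1 (hf a).1 (hf a).2.1 h5.2.2.1 h5.2.2.2 hub ?_
      have := hN1le bb
      have := hα_fa_le a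
      have hpos : 1 ≤ α (f a + 1) := by
        have := hmono (f a) (hf a).1 (hf a).2.1
        omega
      omega
    have hsinf : sInf {k | ∀ bb : Fin n → Bool,
        (∀ i ∈ (mrrList c l0 l1 0 0).take k, bb i = a i) → f bb = f a} ≤ m :=
      Nat.sInf_le hmem
    have hnc : naCost c f a (mrrList c l0 l1 0 0)
        = SC.lcost c ((mrrList c l0 l1 0 0).take (sInf {k | ∀ bb : Fin n → Bool,
            (∀ i ∈ (mrrList c l0 l1 0 0).take k, bb i = a i) → f bb = f a})) := rfl
    rw [hnc]
    calc SC.lcost c ((mrrList c l0 l1 0 0).take (sInf _))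
        ≤ SC.lcost c ((mrrList c l0 l1 0 0).take m) := SC.lcost_take_mono hc' hsinf
      _ ≤ 2 * max (0 + SC.lcost c (l0.take (SC.kneed false a (n + 1 - α (f a + 1)) l0)))
            (0 + SC.lcost c (l1.take (SC.kneed true a (α (f a)) l1))) - 0 - 0 := hcost
      _ ≤ 2 * (SC.wcost c false (n + 1 - α (f a + 1)) l0 a
            + SC.wcost c true (α (f a)) l1 a) := by
          rw [zero_add, zero_add, hs0, hs1]
          have := max_le (le_add_of_nonneg_right hw1 :
            SC.wcost c false (n + 1 - α (f a + 1)) l0 a ≤ _)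
            (le_add_of_nonneg_left hw0 : SC.wcost c true (α (f a)) l1 a ≤ _)
          linarith
  -- MAIN2 : pointwise lower bound on the cost of any order T, per threshold j
  have MAIN2 : ∀ a, ∀ j, 1 ≤ j → j ≤ B - 1 →
      (if j + 1 ≤ f a then SC.wcost c true (α (j+1)) T a else 0)
        + (if f a ≤ j then SC.wcost c false (n + 1 - α (j+1)) T a else 0)
      ≤ naCost c f a T := by
    intro a j hj1 hjB
    set K := {k | ∀ bb : Fin n → Bool, (∀ i ∈ T.take k, bb i = a i) → f bb = f a} with hK
    have hKne : K.Nonempty := by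
      refine ⟨T.length, ?_⟩
      intro bb hag
      have : bb = a := by
        funext i
        exact hag i (by rw [List.take_length]; exact hTcom i)
      rw [this]
    have hmemK : sInf K ∈ K := Nat.sInf_mem hKne
    have hPnd : (T.take (sInf K)).Nodup := hTnd.sublist (List.take_sublist _ _)
    -- necessity: the chosen prefix has enough trues and falses
    have hnec1 : α (f a) ≤ SC.tcnt true a (T.take (sInf K)) := by
      set bb : Fin n → Bool := fun i => if i ∈ T.take (sInf K) then a i else false with hbb
      have hag : ∀ i ∈ T.take (sInf K), bb i = a i := by
        intro i hi; simp only [hbb, if_pos hi]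
      have hfeq : f bb = f a := hmemK bb hag
      have hN1 : N1 bb = SC.tcnt true a (T.take (sInf K)) := SC.N1_patch _ hPnd a
      have := (hf bb).2.2.1
      rw [hfeq, hN1] at this
      exact this
    have hnec0 : n + 1 - α (f a + 1) ≤ SC.tcnt false a (T.take (sInf K)) := by
      set bb : Fin n → Bool := fun i => if i ∈ T.take (sInf K) then a i else true with hbb
      have hag : ∀ i ∈ T.take (sInf K), bb i = a i := by
        intro i hi; simp only [hbb, if_pos hi]
      have hfeq : f bb = f a := hmemK bb hag
      have hN1 : n - N1 bb = SC.tcnt false a (T.take (sInf K)) := SC.N1_patch_true _ hPnd a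
      have h2 := (hf bb).2.2.2
      rw [hfeq] at h2
      have := hN1le bb
      omega
    have hnc : naCost c f a T = SC.lcost c (T.take (sInf K)) := rfl
    rcases le_or_gt (j + 1) (f a) with hcase | hcase
    · rw [if_pos hcase, if_neg (by omega), add_zero, hnc]
      refine SC.wcost_le_lcost_take hc' ?_
      calc α (j+1) ≤ α (f a) := hαm (j+1) (f a) (by omega) hcase (by have := (hf a).2.1; omega)
        _ ≤ _ := hnec1
    · rw [if_neg (by omega), if_pos (by omega), zero_add, hnc]
      refine SC.wcost_le_lcost_take hc' ?_
      have hle : α (f a + 1) ≤ α (j+1) :=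
        hαm (f a + 1) (j+1) (by omega) (by omega) (by omega)
      omega
  -- MAIN3 : pointwise decomposition of the MRR bound over thresholds
  have MAIN3 : ∀ a, SC.wcost c false (n + 1 - α (f a + 1)) l0 a
        + SC.wcost c true (α (f a)) l1 a
      ≤ ∑ j ∈ Finset.Icc 1 (B-1),
          ((if j + 1 ≤ f a then SC.wcost c true (α (j+1)) l1 a else 0)
            + (if f a ≤ j then SC.wcost c false (n + 1 - α (j+1)) l0 a else 0)) := by
    intro a
    have hterm : ∀ j ∈ Finset.Icc 1 (B-1),
        (0:ℝ) ≤ (if j + 1 ≤ f a then SC.wcost c true (α (j+1)) l1 a else 0)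
          + (if f a ≤ j then SC.wcost c false (n + 1 - α (j+1)) l0 a else 0) := by
      intro j _
      have h1 : (0:ℝ) ≤ (if j + 1 ≤ f a then SC.wcost c true (α (j+1)) l1 a else 0) := by
        split <;> [exact SC.wcost_nonneg hc' _ _; exact le_rfl]
      have h2 : (0:ℝ) ≤ (if f a ≤ j then SC.wcost c false (n + 1 - α (j+1)) l0 a else 0) := by
        split <;> [exact SC.wcost_nonneg hc' _ _; exact le_rfl]
      linarith
    rcases Nat.lt_or_ge (f a) 2 with hfa | hfa
    · -- f a = 1 : s1 = 0
      have hfa1 : f a = 1 := by have := (hf a).1; omega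
      have hs1 : SC.wcost c true (α (f a)) l1 a = 0 := by
        rw [hfa1, hα1]; exact SC.wcost_zero
      have hmem : f a ∈ Finset.Icc 1 (B-1) := by
        rw [hfa1]; simp [Finset.mem_Icc]; omega
      have hsingle := Finset.single_le_sum hterm hmem
      rw [if_neg (by omega), if_pos le_rfl, zero_add] at hsingle
      rw [hs1, add_zero]
      exact hsingle
    · rcases Nat.lt_or_ge (f a) B with hfaB | hfaB
      · -- 2 ≤ f a ≤ B-1 : both terms present at j = f a - 1 and j = f a
        set F : ℕ → ℝ := fun j =>
          (if j + 1 ≤ f a then SC.wcost c true (α (j+1)) l1 a else 0)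
            + (if f a ≤ j then SC.wcost c false (n + 1 - α (j+1)) l0 a else 0) with hF
        have hmem1 : f a - 1 ∈ Finset.Icc 1 (B-1) := by
          rw [Finset.mem_Icc]; omega
        have hmem2' : f a ∈ (Finset.Icc 1 (B-1)).erase (f a - 1) := by
          rw [Finset.mem_erase, Finset.mem_Icc]
          exact ⟨by omega, by omega, by omega⟩
        have hsum := Finset.add_sum_erase _ F hmem1
        have hsum2 := Finset.add_sum_erase _ F hmem2'
        have hrest : (0:ℝ) ≤ ∑ j ∈ ((Finset.Icc 1 (B-1)).erase (f a - 1)).erase (f a), F j := by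
          refine Finset.sum_nonneg fun j hj => hterm j
            (Finset.mem_of_mem_erase (Finset.mem_of_mem_erase hj))
        have he1 : f a - 1 + 1 = f a := by omega
        have v1 : F (f a - 1) = SC.wcost c true (α (f a)) l1 a := by
          show (if (f a - 1) + 1 ≤ f a then SC.wcost c true (α ((f a - 1)+1)) l1 a else 0)
            + (if f a ≤ f a - 1 then SC.wcost c false (n + 1 - α ((f a - 1)+1)) l0 a else 0) = _
          rw [he1, if_pos le_rfl, if_neg (by omega), add_zero]
        have v2 : F (f a) = SC.wcost c false (n + 1 - α (f a + 1)) l0 a := by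
          show (if f a + 1 ≤ f a then SC.wcost c true (α (f a + 1)) l1 a else 0)
            + (if f a ≤ f a then SC.wcost c false (n + 1 - α (f a + 1)) l0 a else 0) = _
          rw [if_neg (by omega), if_pos le_rfl, zero_add]
        have hgoal : SC.wcost c false (n + 1 - α (f a + 1)) l0 a
            + SC.wcost c true (α (f a)) l1 a ≤ ∑ j ∈ Finset.Icc 1 (B-1), F j := by
          rw [← hsum, ← hsum2, v1, v2]
          linarith
        exact hgoal
      · -- f a = B : s0 = 0
        have hfaB' : f a = B := by have := (hf a).2.1; omega
        have hs0 : SC.wcost c false (n + 1 - α (f a + 1)) l0 a = 0 := by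
          rw [hfaB', hαtop]
          simp only [Nat.sub_self]
          exact SC.wcost_zero
        have hmem : f a - 1 ∈ Finset.Icc 1 (B-1) := by simp [Finset.mem_Icc]; omega
        have hsingle := Finset.single_le_sum hterm hmem
        have he1 : f a - 1 + 1 = f a := by omega
        rw [if_pos (by omega), if_neg (by omega), add_zero, he1] at hsingle
        rw [hs0, zero_add]
        exact hsingle
  -- MAIN4 : expectation comparison per threshold (exchange argument)
  have MAIN4 : ∀ j, 1 ≤ j → j ≤ B - 1 →
      (∑ a : Fin n → Bool,
        ((if j + 1 ≤ f a then SC.wcost c true (α (j+1)) l1 a else 0)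
          + (if f a ≤ j then SC.wcost c false (n + 1 - α (j+1)) l0 a else 0)) * pr p a)
      ≤ ∑ a : Fin n → Bool,
        ((if j + 1 ≤ f a then SC.wcost c true (α (j+1)) T a else 0)
          + (if f a ≤ j then SC.wcost c false (n + 1 - α (j+1)) T a else 0)) * pr p a := by
    intro j hj1 hjB
    have hfeq : ∀ a : Fin n → Bool, (j + 1 ≤ f a ↔ α (j+1) ≤ N1 a) := by
      intro a
      constructor
      · intro h
        calc α (j+1) ≤ α (f a) := hαm _ _ (by omega) h (by have := (hf a).2.1; omega)
          _ ≤ N1 a := (hf a).2.2.1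
      · intro h
        by_contra hcon
        have hfa : f a ≤ j := by omega
        have : α (f a + 1) ≤ α (j + 1) := hαm _ _ (by have := (hf a).1; omega) (by omega) (by omega)
        have := (hf a).2.2.2
        omega
    -- 1-side
    have hq1 : ∀ i, 0 ≤ p i ∧ p i ≤ 1 := fun i => ⟨(hp i).1.le, (hp i).2.le⟩
    have hpair1 : l1.Pairwise (fun i j => c i * p j ≤ c j * p i) := by
      refine hl1sort.imp ?_
      intro i j h
      exact (div_le_div_iff₀ (hp i).1 (hp j).1).1 h
    have hEW1 : ∑ a : Fin n → Bool, SC.wcost c true (α (j+1)) l1 a * pr p a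
        ≤ ∑ a : Fin n → Bool, SC.wcost c true (α (j+1)) T a * pr p a := by
      have e1 : (fun i : Fin n => if (true : Bool) = true then p i else 1 - p i) = p := by
        funext i; simp
      have i1 := SC.sum_wcost_eq_EW (p := p) (c := c) (bb := true) hl1nd (α (j+1))
      have i2 := SC.sum_wcost_eq_EW (p := p) (c := c) (bb := true) hTnd (α (j+1))
      rw [e1] at i1 i2
      rw [i1, i2]
      exact SC.EW_sorted_le hq1 hpair1 hperm1 _
    -- 0-side
    have hq0 : ∀ i, 0 ≤ 1 - p i ∧ 1 - p i ≤ 1 := fun i => ⟨by have := (hp i).2; linarith,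
      by have := (hp i).1; linarith⟩
    have hpair0 : l0.Pairwise (fun i j => c i * (1 - p j) ≤ c j * (1 - p i)) := by
      refine hl0sort.imp ?_
      intro i j h
      exact (div_le_div_iff₀ (by have := (hp i).2; linarith) (by have := (hp j).2; linarith)).1 h
    have hEW0 : ∑ a : Fin n → Bool, SC.wcost c false (n + 1 - α (j+1)) l0 a * pr p a
        ≤ ∑ a : Fin n → Bool, SC.wcost c false (n + 1 - α (j+1)) T a * pr p a := by
      have e0 : (fun i : Fin n => if (false : Bool) = true then p i else 1 - p i)
          = (fun i => 1 - p i) := by funext i; simp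
      have i1 := SC.sum_wcost_eq_EW (p := p) (c := c) (bb := false) hl0nd (n + 1 - α (j+1))
      have i2 := SC.sum_wcost_eq_EW (p := p) (c := c) (bb := false) hTnd (n + 1 - α (j+1))
      rw [e0] at i1 i2
      rw [i1, i2]
      exact SC.EW_sorted_le hq0 hpair0 hperm0 _
    -- rewrite indicators as differences against the full cost
    have hCT1 : SC.lcost c l1 = SC.lcost c T := SC.lcost_perm hperm1
    have hCT0 : SC.lcost c l0 = SC.lcost c T := SC.lcost_perm hperm0
    have key1 : ∀ (l : List (Fin n)), l.Nodup → (∀ i, i ∈ l) →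
        ∀ a : Fin n → Bool, (if j + 1 ≤ f a then SC.wcost c true (α (j+1)) l a else 0)
          = SC.wcost c true (α (j+1)) l a
            - (if j + 1 ≤ f a then 0 else SC.lcost c T) := by
      intro l h1 h2 a
      by_cases h : j + 1 ≤ f a
      · rw [if_pos h, if_pos h]; ring
      · rw [if_neg h, if_neg h]
        have hlt : SC.tcnt true a l < α (j+1) := by
          rw [htcnt1 l h1 h2]
          have := (hfeq a).2
          omega
        rw [SC.wcost_eq_lcost_of_lt hlt]
        have : SC.lcost c l = SC.lcost c T :=
          SC.lcost_perm (List.perm_of_nodup_nodup_toFinset_eq h1 hTnd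
            (by ext i; simp [h2 i, hTcom i]))
        rw [this]; ring
    have key0 : ∀ (l : List (Fin n)), l.Nodup → (∀ i, i ∈ l) →
        ∀ a : Fin n → Bool, (if f a ≤ j then SC.wcost c false (n + 1 - α (j+1)) l a else 0)
          = SC.wcost c false (n + 1 - α (j+1)) l a
            - (if f a ≤ j then 0 else SC.lcost c T) := by
      intro l h1 h2 a
      by_cases h : f a ≤ j
      · rw [if_pos h, if_pos h]; ring
      · rw [if_neg h, if_neg h]
        have hlt : SC.tcnt false a l < n + 1 - α (j+1) := by
          rw [htcnt0 l h1 h2]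
          have hge : α (j+1) ≤ N1 a := (hfeq a).1 (by omega)
          have := hN1le a
          have hle : α (j+1) ≤ n := by
            have h3 : α (j+1) ≤ N1 a := hge
            omega
          omega
        rw [SC.wcost_eq_lcost_of_lt hlt]
        have : SC.lcost c l = SC.lcost c T :=
          SC.lcost_perm (List.perm_of_nodup_nodup_toFinset_eq h1 hTnd
            (by ext i; simp [h2 i, hTcom i]))
        rw [this]; ring
    have expand : ∀ (l0' l1' : List (Fin n)), l0'.Nodup → (∀ i, i ∈ l0') →
        l1'.Nodup → (∀ i, i ∈ l1') →
        ∑ a : Fin n → Bool,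
          ((if j + 1 ≤ f a then SC.wcost c true (α (j+1)) l1' a else 0)
            + (if f a ≤ j then SC.wcost c false (n + 1 - α (j+1)) l0' a else 0)) * pr p a
        = ∑ a : Fin n → Bool, SC.wcost c true (α (j+1)) l1' a * pr p a
          + ∑ a : Fin n → Bool, SC.wcost c false (n + 1 - α (j+1)) l0' a * pr p a
          - ∑ a : Fin n → Bool, ((if j + 1 ≤ f a then 0 else SC.lcost c T)
              + (if f a ≤ j then 0 else SC.lcost c T)) * pr p a := by
      intro l0' l1' h0n h0c h1n h1c
      rw [← Finset.sum_add_distrib, ← Finset.sum_sub_distrib]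
      refine Finset.sum_congr rfl fun a _ => ?_
      rw [key1 l1' h1n h1c a, key0 l0' h0n h0c a]
      ring
    rw [expand l0 l1 hl0nd hl0com hl1nd hl1com, expand T T hTnd hTcom hTnd hTcom]
    linarith [hEW1, hEW0]
  -- Assemble everything
  have hprnn : ∀ a : Fin n → Bool, 0 ≤ pr p a := SC.pr_nonneg hp
  have step1 : naExpCost p c f (mrrList c l0 l1 0 0)
      ≤ ∑ a : Fin n → Bool,
          (2 * ∑ j ∈ Finset.Icc 1 (B-1),
            ((if j + 1 ≤ f a then SC.wcost c true (α (j+1)) l1 a else 0)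
              + (if f a ≤ j then SC.wcost c false (n + 1 - α (j+1)) l0 a else 0))) * pr p a := by
    refine Finset.sum_le_sum fun a _ => mul_le_mul_of_nonneg_right ?_ (hprnn a)
    calc naCost c f a (mrrList c l0 l1 0 0)
        ≤ 2 * (SC.wcost c false (n + 1 - α (f a + 1)) l0 a
            + SC.wcost c true (α (f a)) l1 a) := MAIN1 a
      _ ≤ _ := by
          have := MAIN3 a
          linarith
  have step2 : ∑ a : Fin n → Bool,
        (2 * ∑ j ∈ Finset.Icc 1 (B-1),
          ((if j + 1 ≤ f a then SC.wcost c true (α (j+1)) l1 a else 0)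
            + (if f a ≤ j then SC.wcost c false (n + 1 - α (j+1)) l0 a else 0))) * pr p a
      = 2 * ∑ j ∈ Finset.Icc 1 (B-1), ∑ a : Fin n → Bool,
          ((if j + 1 ≤ f a then SC.wcost c true (α (j+1)) l1 a else 0)
            + (if f a ≤ j then SC.wcost c false (n + 1 - α (j+1)) l0 a else 0)) * pr p a := by
    have h1 : ∀ a : Fin n → Bool,
        (2 * ∑ j ∈ Finset.Icc 1 (B-1),
          ((if j + 1 ≤ f a then SC.wcost c true (α (j+1)) l1 a else 0)
            + (if f a ≤ j then SC.wcost c false (n + 1 - α (j+1)) l0 a else 0))) * pr p a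
        = ∑ j ∈ Finset.Icc 1 (B-1),
            2 * (((if j + 1 ≤ f a then SC.wcost c true (α (j+1)) l1 a else 0)
              + (if f a ≤ j then SC.wcost c false (n + 1 - α (j+1)) l0 a else 0)) * pr p a) := by
      intro a
      rw [mul_assoc, Finset.sum_mul, Finset.mul_sum]
    rw [Finset.sum_congr rfl fun a _ => h1 a, Finset.sum_comm, Finset.mul_sum]
    refine Finset.sum_congr rfl fun j _ => ?_
    rw [Finset.mul_sum]
  have step3 : ∑ j ∈ Finset.Icc 1 (B-1), ∑ a : Fin n → Bool,
        ((if j + 1 ≤ f a then SC.wcost c true (α (j+1)) l1 a else 0)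
          + (if f a ≤ j then SC.wcost c false (n + 1 - α (j+1)) l0 a else 0)) * pr p a
      ≤ ∑ j ∈ Finset.Icc 1 (B-1), naExpCost p c f T := by
    refine Finset.sum_le_sum fun j hj => ?_
    rw [Finset.mem_Icc] at hj
    calc _ ≤ ∑ a : Fin n → Bool,
          ((if j + 1 ≤ f a then SC.wcost c true (α (j+1)) T a else 0)
            + (if f a ≤ j then SC.wcost c false (n + 1 - α (j+1)) T a else 0)) * pr p a :=
        MAIN4 j hj.1 hj.2
      _ ≤ ∑ a : Fin n → Bool, naCost c f a T * pr p a :=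
        Finset.sum_le_sum fun a _ =>
          mul_le_mul_of_nonneg_right (MAIN2 a j hj.1 hj.2) (hprnn a)
      _ = naExpCost p c f T := rfl
  have hcard : (Finset.Icc 1 (B-1)).card = B - 1 := by
    rw [Nat.card_Icc]
    omega
  have step4 : ∑ j ∈ Finset.Icc 1 (B-1), naExpCost p c f T
      = ((B:ℝ) - 1) * naExpCost p c f T := by
    rw [Finset.sum_const, hcard, nsmul_eq_mul]
    congr 1
    push_cast [Nat.cast_sub (by omega : 1 ≤ B)]
    ring
  calc naExpCost p c f (mrrList c l0 l1 0 0)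
      ≤ _ := step1
    _ = 2 * ∑ j ∈ Finset.Icc 1 (B-1), ∑ a : Fin n → Bool,
          ((if j + 1 ≤ f a then SC.wcost c true (α (j+1)) l1 a else 0)
            + (if f a ≤ j then SC.wcost c false (n + 1 - α (j+1)) l0 a else 0)) * pr p a := step2
    _ ≤ 2 * ∑ j ∈ Finset.Icc 1 (B-1), naExpCost p c f T := by linarith [step3]
    _ = 2 * ((B:ℝ) - 1) * naExpCost p c f T := by rw [step4]; ring
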